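/- Fix an integer q ≥ 1 and let a_m denote the number of unbordered words of length m over a q-letter alphabet (e.g. Fin q). Then a_0 = 1, a_{2n+1} = q·a_{2n} for all n ≥ 0, and a_{2n} = q·a_{2n-1} − a_n for all n ≥ 1. -/

import Mathlib

/-- `B` is a border of the word `W`: a nonempty proper suffix of `W`
(proper meaning of length strictly less than `|W|`) that is also a prefix of `W`. -/
def IsBorder {α : Type*} (B W : List α) : Prop :=
  B ≠ [] ∧ B.length < W.length ∧ B <:+ W ∧ B <+: W

/-- A word is unbordered if it has no border. -/
def Unbordered {α : Type*} (W : List α) : Prop :=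
  ∀ B, ¬ IsBorder B W

namespace UBaux

variable {α : Type*}

lemma border_trans {C B W : List α} (h1 : IsBorder C B) (h2 : IsBorder B W) : IsBorder C W :=
  ⟨h1.1, h1.2.1.trans h2.2.1, h1.2.2.1.trans h2.2.2.1, h1.2.2.2.trans h2.2.2.2⟩

lemma border_of_long {B W : List α} (h : IsBorder B W) (hlong : W.length < 2 * B.length) :
    IsBorder (B.drop (W.length - B.length)) B := by
  obtain ⟨hne, hlt, hsuf, hpre⟩ := h
  have hBpos : 0 < B.length := List.length_pos_iff.mpr hne
  refine ⟨?_, ?_, List.drop_suffix _ _, ?_⟩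
  · intro hh
    have := congrArg List.length hh
    simp only [List.length_drop, List.length_nil] at this
    omega
  · simp only [List.length_drop]; omega
  · have hBt : B = W.take B.length := List.prefix_iff_eq_take.mp hpre
    have hBd : B = W.drop (W.length - B.length) := List.suffix_iff_eq_drop.mp hsuf
    have e1 : B.drop (W.length - B.length) = B.take (B.length - (W.length - B.length)) := by
      nth_rewrite 2 [hBt]
      rw [List.drop_take, ← hBd]
    rw [e1]
    exact List.take_prefix _ _

lemma exists_short_border {W : List α} :
    ∀ k (B : List α), B.length ≤ k → IsBorder B W →
      ∃ C, IsBorder C W ∧ 2 * C.length ≤ W.length := by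
  intro k
  induction k with
  | zero =>
    intro B hB h
    have := List.length_pos_iff.mpr h.1
    omega
  | succ k ih =>
    intro B hB h
    by_cases hc : 2 * B.length ≤ W.length
    · exact ⟨B, h, hc⟩
    · have hb := border_of_long h (by omega)
      have hlen : (B.drop (W.length - B.length)).length < B.length := hb.2.1
      exact ih _ (by omega) (border_trans hb h)


lemma unbordered_middle (x y : List α) (c : α) (h : x.length = y.length) :
    Unbordered (x ++ c :: y) ↔ Unbordered (x ++ y) := by
  constructor
  · intro hub B hB
    obtain ⟨C, ⟨hne, hlt, hsuf, hpre⟩, hlen⟩ := exists_short_border B.length B le_rfl hB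
    have hCpos := List.length_pos_iff.mpr hne
    simp only [List.length_append] at hlt hlen
    have hCx : C.length ≤ x.length := by omega
    have hpre' : C <+: x := List.prefix_of_prefix_length_le hpre (x.prefix_append y) hCx
    have hsuf' : C <:+ y :=
      List.suffix_of_suffix_length_le hsuf (⟨x, rfl⟩ : y <:+ x ++ y) (by omega)
    exact hub C ⟨hne, by simp; omega,
      hsuf'.trans (⟨x ++ [c], by simp⟩ : y <:+ x ++ c :: y),
      hpre'.trans (x.prefix_append _)⟩
  · intro hub B hB
    obtain ⟨C, ⟨hne, hlt, hsuf, hpre⟩, hlen⟩ := exists_short_border B.length B le_rfl hB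
    have hCpos := List.length_pos_iff.mpr hne
    simp only [List.length_append, List.length_cons] at hlt hlen
    have hCx : C.length ≤ x.length := by omega
    have hpre' : C <+: x := List.prefix_of_prefix_length_le hpre (x.prefix_append _) hCx
    have hsuf' : C <:+ y :=
      List.suffix_of_suffix_length_le hsuf (⟨x ++ [c], by simp⟩ : y <:+ x ++ c :: y) (by omega)
    exact hub C ⟨hne, by simp; omega, hsuf'.trans (⟨x, rfl⟩ : y <:+ x ++ y),
      hpre'.trans (x.prefix_append y)⟩

lemma unbordered_evenstep (x y : List α) (c : α) (hxy : x.length = y.length + 1) :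
    Unbordered (x ++ c :: y) ↔ (Unbordered (x ++ y) ∧ x ≠ c :: y) := by
  constructor
  · intro hub
    constructor
    · intro B hB
      obtain ⟨C, ⟨hne, hlt, hsuf, hpre⟩, hlen⟩ := exists_short_border B.length B le_rfl hB
      have hCpos := List.length_pos_iff.mpr hne
      simp only [List.length_append] at hlt hlen
      have hCy : C.length ≤ y.length := by omega
      have hpre' : C <+: x := List.prefix_of_prefix_length_le hpre (x.prefix_append y) (by omega)
      have hsuf' : C <:+ y :=
        List.suffix_of_suffix_length_le hsuf (⟨x, rfl⟩ : y <:+ x ++ y) hCy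
      exact hub C ⟨hne, by simp; omega,
        hsuf'.trans (⟨x ++ [c], by simp⟩ : y <:+ x ++ c :: y),
        hpre'.trans (x.prefix_append _)⟩
    · intro hxc
      have hxne : x ≠ [] := by intro hh; rw [hh] at hxy; simp at hxy
      exact hub x ⟨hxne, by simp,
        (⟨x, by rw [← hxc]⟩ : x <:+ x ++ c :: y), x.prefix_append _⟩
  · rintro ⟨hub, hne⟩ B hB
    obtain ⟨C, ⟨hCne, hlt, hsuf, hpre⟩, hlen⟩ := exists_short_border B.length B le_rfl hB
    have hCpos := List.length_pos_iff.mpr hCne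
    simp only [List.length_append, List.length_cons] at hlt hlen
    have hCx : C.length ≤ x.length := by omega
    rcases eq_or_lt_of_le hCx with heq | hlt2
    · have hx : C = x :=
        (List.prefix_of_prefix_length_le hpre (x.prefix_append _) hCx).eq_of_length heq
      have hcy : C = c :: y :=
        (List.suffix_of_suffix_length_le hsuf (⟨x, rfl⟩ : c :: y <:+ x ++ c :: y)
          (by simp; omega)).eq_of_length (by simp; omega)
      exact hne (hx ▸ hcy)
    · have hpre' : C <+: x := List.prefix_of_prefix_length_le hpre (x.prefix_append _) hCx
      have hsuf' : C <:+ y :=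
        List.suffix_of_suffix_length_le hsuf (⟨x ++ [c], by simp⟩ : y <:+ x ++ c :: y)
          (by omega)
      exact hub C ⟨hCne, by simp; omega, hsuf'.trans (⟨x, rfl⟩ : y <:+ x ++ y),
        hpre'.trans (x.prefix_append y)⟩

lemma unbordered_double (a : α) (z : List α) :
    Unbordered (a :: (z ++ z)) ↔ Unbordered (a :: z) := by
  constructor
  · intro hub B hB
    obtain ⟨hne, hlt, hsuf, hpre⟩ := hB
    have hBpos := List.length_pos_iff.mpr hne
    simp only [List.length_cons] at hlt
    have hBz : B.length ≤ z.length := by omega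
    have hsuf' : B <:+ z :=
      List.suffix_of_suffix_length_le hsuf (⟨[a], rfl⟩ : z <:+ a :: z) hBz
    exact hub B ⟨hne, by simp; omega,
      hsuf'.trans (⟨a :: z, by simp⟩ : z <:+ a :: (z ++ z)),
      hpre.trans (⟨z, by simp⟩ : (a :: z) <+: a :: (z ++ z))⟩
  · intro hub B hB
    obtain ⟨C, ⟨hne, hlt, hsuf, hpre⟩, hlen⟩ := exists_short_border B.length B le_rfl hB
    have hCpos := List.length_pos_iff.mpr hne
    simp only [List.length_cons, List.length_append] at hlt hlen
    have hCz : C.length ≤ z.length := by omega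
    have hpre' : C <+: a :: z :=
      List.prefix_of_prefix_length_le hpre (⟨z, by simp⟩ : (a :: z) <+: a :: (z ++ z))
        (by simp; omega)
    have hsuf' : C <:+ z :=
      List.suffix_of_suffix_length_le hsuf (⟨a :: z, by simp⟩ : z <:+ a :: (z ++ z)) hCz
    exact hub C ⟨hne, by simp; omega, hsuf'.trans (⟨[a], rfl⟩ : z <:+ a :: z), hpre'⟩

lemma unbordered_nil : Unbordered ([] : List α) := by
  intro B hB
  have := hB.2.1
  simp at this

lemma decomp (w : List α) (n : ℕ) (h : n < w.length) :
    w = w.take n ++ w[n] :: w.drop (n + 1) := by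
  conv_lhs => rw [← List.take_append_drop n w]
  rw [List.drop_eq_getElem_cons h]


def S (q m : ℕ) : Type := {w : List (Fin q) // w.length = m ∧ Unbordered w}

instance (q m : ℕ) : Finite (S q m) := by
  have : Finite {w : List (Fin q) // w.length = m} :=
    inferInstanceAs (Finite (List.Vector (Fin q) m))
  exact Finite.of_injective
    (fun w : S q m => (⟨w.val, w.2.1⟩ : {w : List (Fin q) // w.length = m}))
    (fun a b h => Subtype.ext (by simpa using congrArg Subtype.val h))

variable {q : ℕ}

lemma memOdd {n : ℕ} {w : List (Fin q)} (h1 : w.length = 2*n+1) (h2 : Unbordered w) :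
    (w.take n ++ w.drop (n+1)).length = 2*n ∧ Unbordered (w.take n ++ w.drop (n+1)) := by
  have hn : n < w.length := by omega
  have hx : (w.take n).length = n := by rw [List.length_take]; omega
  have hy : (w.drop (n+1)).length = n := by rw [List.length_drop]; omega
  have hd := decomp w n hn
  rw [hd] at h2
  exact ⟨by rw [List.length_append, hx, hy]; omega,
    (unbordered_middle _ _ _ (hx.trans hy.symm)).mp h2⟩

lemma memOddInv {n : ℕ} (c : Fin q) {u : List (Fin q)} (h1 : u.length = 2*n) (h2 : Unbordered u) :
    (u.take n ++ c :: u.drop n).length = 2*n+1 ∧ Unbordered (u.take n ++ c :: u.drop n) := by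
  have hx : (u.take n).length = n := by rw [List.length_take]; omega
  have hy : (u.drop n).length = n := by rw [List.length_drop]; omega
  refine ⟨by rw [List.length_append, List.length_cons, hx, hy]; omega, ?_⟩
  apply (unbordered_middle _ _ _ (hx.trans hy.symm)).mpr
  rwa [List.take_append_drop]

def equivOdd (q n : ℕ) : S q (2*n+1) ≃ (Fin q) × S q (2*n) where
  toFun w := (w.val[n]'(by rw [w.2.1]; omega),
    ⟨w.val.take n ++ w.val.drop (n+1), memOdd w.2.1 w.2.2⟩)
  invFun p := ⟨p.2.val.take n ++ p.1 :: p.2.val.drop n, memOddInv p.1 p.2.2.1 p.2.2.2⟩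
  left_inv w := by
    obtain ⟨w, h1, h2⟩ := w
    apply Subtype.ext
    simp only
    have hx : (w.take n).length = n := by rw [List.length_take]; omega
    rw [List.take_left' hx, List.drop_left' hx]
    exact (decomp w n (by omega)).symm
  right_inv p := by
    obtain ⟨c, u, h1, h2⟩ := p
    have hx : (u.take n).length = n := by rw [List.length_take]; omega
    have hn : n < (u.take n ++ c :: u.drop n).length := by
      rw [List.length_append, List.length_cons, hx]; omega
    have hdrop : (u.take n ++ c :: u.drop n).drop n = c :: u.drop n := List.drop_left' hx
    have hcons := List.drop_eq_getElem_cons hn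
    rw [hdrop] at hcons
    obtain ⟨hc, ht⟩ := List.cons.inj hcons
    simp only [Prod.mk.injEq]
    refine Prod.ext hc.symm (Subtype.ext ?_)
    simp only
    rw [List.take_left' hx, ← ht, List.take_append_drop]

lemma memEvenL {m : ℕ} {w : List (Fin q)} (h1 : w.length = 2*(m+1)) (h2 : Unbordered w) :
    ((w.take (m+1) ++ w.drop (m+1+1)).length = 2*m+1 ∧
      Unbordered (w.take (m+1) ++ w.drop (m+1+1)))
    ∧ w.take (m+1) ≠ (w[m+1]'(by omega)) :: w.drop (m+1+1) := by
  have hn : m+1 < w.length := by omega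
  have hx : (w.take (m+1)).length = m+1 := by rw [List.length_take]; omega
  have hy : (w.drop (m+1+1)).length = m := by rw [List.length_drop]; omega
  have hd := decomp w (m+1) hn
  rw [hd] at h2
  have h3 := (unbordered_evenstep _ _ _ (by rw [hx, hy])).mp h2
  exact ⟨⟨by rw [List.length_append, hx, hy]; omega, h3.1⟩, h3.2⟩

lemma memEvenR {m : ℕ} {u : List (Fin q)} (h1 : u.length = m+1) (h2 : Unbordered u) :
    (u ++ u.drop 1).length = 2*m+1 ∧ Unbordered (u ++ u.drop 1) := by
  have h0 : 0 < u.length := by omega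
  have hd : u = (u[0]'h0) :: u.drop 1 := by simpa using decomp u 0 h0
  refine ⟨by simp only [List.length_append, List.length_drop]; omega, ?_⟩
  have he : u ++ u.drop 1 = (u[0]'h0) :: (u.drop 1 ++ u.drop 1) := by
    nth_rewrite 1 [hd]; rfl
  rw [he]
  exact (unbordered_double _ _).mpr (by rw [← hd]; exact h2)

lemma memEvenInvR {m : ℕ} {w : List (Fin q)} (c : Fin q) (h1 : w.length = 2*m+1)
    (h2 : Unbordered w) (h : w.take (m+1) = c :: w.drop (m+1)) :
    (w.take (m+1)).length = m+1 ∧ Unbordered (w.take (m+1)) := by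
  refine ⟨by rw [List.length_take]; omega, ?_⟩
  have hw : w = c :: (w.drop (m+1) ++ w.drop (m+1)) := by
    conv_lhs => rw [← List.take_append_drop (m+1) w]
    rw [h]
    rfl
  rw [h]
  exact (unbordered_double _ _).mp (by rw [← hw]; exact h2)

lemma memEvenInvL {m : ℕ} {w : List (Fin q)} (c : Fin q) (h1 : w.length = 2*m+1)
    (h2 : Unbordered w) (h : w.take (m+1) ≠ c :: w.drop (m+1)) :
    (w.take (m+1) ++ c :: w.drop (m+1)).length = 2*(m+1) ∧
      Unbordered (w.take (m+1) ++ c :: w.drop (m+1)) := by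
  have hx : (w.take (m+1)).length = m+1 := by rw [List.length_take]; omega
  have hy : (w.drop (m+1)).length = m := by rw [List.length_drop]; omega
  refine ⟨by rw [List.length_append, List.length_cons, hx, hy]; omega, ?_⟩
  exact (unbordered_evenstep _ _ _ (by rw [hx, hy])).mpr
    ⟨by rwa [List.take_append_drop], h⟩

def equivEven (q m : ℕ) : (S q (2*(m+1)) ⊕ S q (m+1)) ≃ (Fin q) × S q (2*m+1) where
  toFun x := match x with
    | Sum.inl w => (w.val[m+1]'(by rw [w.2.1]; omega),
        ⟨w.val.take (m+1) ++ w.val.drop (m+1+1), (memEvenL w.2.1 w.2.2).1⟩)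
    | Sum.inr u => (u.val[0]'(by rw [u.2.1]; omega),
        ⟨u.val ++ u.val.drop 1, memEvenR u.2.1 u.2.2⟩)
  invFun p :=
    if h : p.2.val.take (m+1) = p.1 :: p.2.val.drop (m+1) then
      Sum.inr ⟨p.2.val.take (m+1), memEvenInvR p.1 p.2.2.1 p.2.2.2 h⟩
    else
      Sum.inl ⟨p.2.val.take (m+1) ++ p.1 :: p.2.val.drop (m+1), memEvenInvL p.1 p.2.2.1 p.2.2.2 h⟩
  left_inv x := by
    match x with
    | Sum.inl ⟨w, h1, h2⟩ =>
      have hx : (w.take (m+1)).length = m+1 := by rw [List.length_take]; omega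
      have hcond : ¬ ((w.take (m+1) ++ w.drop (m+1+1)).take (m+1)
          = (w[m+1]'(by omega)) :: (w.take (m+1) ++ w.drop (m+1+1)).drop (m+1)) := by
        rw [List.take_left' hx, List.drop_left' hx]
        exact (memEvenL h1 h2).2
      simp only
      rw [dif_neg hcond]
      refine congrArg Sum.inl (Subtype.ext ?_)
      show (w.take (m+1) ++ w.drop (m+1+1)).take (m+1)
          ++ (w[m+1]'(by omega)) :: (w.take (m+1) ++ w.drop (m+1+1)).drop (m+1) = w
      rw [List.take_left' hx, List.drop_left' hx]
      exact (decomp w (m+1) (by omega)).symm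
    | Sum.inr ⟨u, h1, h2⟩ =>
      have htake : (u ++ u.drop 1).take (m+1) = u := List.take_left' h1
      have hdrop : (u ++ u.drop 1).drop (m+1) = u.drop 1 := List.drop_left' h1
      have hd : u = (u[0]'(by omega)) :: u.drop 1 := by simpa using decomp u 0 (by omega)
      have hcond : (u ++ u.drop 1).take (m+1)
          = (u[0]'(by omega)) :: (u ++ u.drop 1).drop (m+1) := by
        rw [htake, hdrop]; exact hd
      simp only
      rw [dif_pos hcond]
      exact congrArg Sum.inr (Subtype.ext htake)
  right_inv p := by
    obtain ⟨c, w, h1, h2⟩ := p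
    by_cases h : w.take (m+1) = c :: w.drop (m+1)
    · simp only
      rw [dif_pos h]
      simp only [Prod.mk.injEq]
      refine Prod.ext ?_ ?_
      · simp [h]
      · refine Subtype.ext ?_
        show w.take (m+1) ++ (w.take (m+1)).drop 1 = w
        rw [h]
        show c :: (w.drop (m+1) ++ w.drop (m+1)) = w
        conv_rhs => rw [← List.take_append_drop (m+1) w]
        rw [h]
        rfl
    · simp only
      rw [dif_neg h]
      have hx : (w.take (m+1)).length = m+1 := by rw [List.length_take]; omega
      have hn : m+1 < (w.take (m+1) ++ c :: w.drop (m+1)).length := by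
        rw [List.length_append, List.length_cons, hx]; omega
      have hdrop : (w.take (m+1) ++ c :: w.drop (m+1)).drop (m+1) = c :: w.drop (m+1) :=
        List.drop_left' hx
      have hcons := List.drop_eq_getElem_cons hn
      rw [hdrop] at hcons
      obtain ⟨hc, ht⟩ := List.cons.inj hcons
      simp only [Prod.mk.injEq]
      refine Prod.ext hc.symm (Subtype.ext ?_)
      show (w.take (m+1) ++ c :: w.drop (m+1)).take (m+1)
          ++ (w.take (m+1) ++ c :: w.drop (m+1)).drop (m+1+1) = w
      rw [List.take_left' hx, ← ht, List.take_append_drop]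

end UBaux

open UBaux

/-- The number of unbordered words of length `m` over a `q`-letter alphabet. -/
noncomputable def countUnbordered (q m : ℕ) : ℕ :=
  Nat.card {w : List (Fin q) // w.length = m ∧ Unbordered w}

/-- For `q ≥ 1`, the counts `a m` of unbordered words of length `m` over a `q`-letter
alphabet satisfy `a 0 = 1`, `a (2n+1) = q·a (2n)`, and `a (2n) = q·a (2n-1) − a n`
(for `n ≥ 1`). -/
theorem unbordered_count_recursion (q : ℕ) (hq : 1 ≤ q) :
    countUnbordered q 0 = 1 ∧
    (∀ n : ℕ, countUnbordered q (2 * n + 1) = q * countUnbordered q (2 * n)) ∧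
    (∀ n : ℕ, 1 ≤ n →
      (countUnbordered q (2 * n) : ℤ) =
        q * countUnbordered q (2 * n - 1) - countUnbordered q n) := by
  have count_eq : ∀ m, countUnbordered q m = Nat.card (S q m) := fun m => rfl
  refine ⟨?_, ?_, ?_⟩
  · rw [count_eq]
    haveI : Unique (S q 0) :=
      { default := ⟨[], rfl, unbordered_nil⟩,
        uniq := fun w => Subtype.ext (List.length_eq_zero_iff.mp w.2.1) }
    exact Nat.card_unique
  · intro n
    rw [count_eq, count_eq, Nat.card_congr (equivOdd q n), Nat.card_prod,
      Nat.card_eq_fintype_card (α := Fin q), Fintype.card_fin]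
  · intro n hn
    obtain ⟨m, rfl⟩ : ∃ m, n = m + 1 := ⟨n - 1, by omega⟩
    have hcard := Nat.card_congr (equivEven q m)
    rw [Nat.card_sum, Nat.card_prod, Nat.card_eq_fintype_card (α := Fin q),
      Fintype.card_fin] at hcard
    have h1 : 2 * (m + 1) - 1 = 2 * m + 1 := by omega
    rw [h1, count_eq, count_eq, count_eq]
    have := hcard
    push_cast
    omega
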